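/- For natural numbers m ≥ 1 and ℓ: C(m + mℓ − 1, mℓ) = 1 + ∑_{i=1}^{⌊mℓ/(ℓ+1)⌋} (−1)^{i+1} · C(m, i) · C(m + mℓ − i(ℓ+1) − 1, mℓ − i(ℓ+1)), as an identity in ℤ. -/

import Mathlib

open PowerSeries Finset

lemma aux_natDegree (ℓ : ℕ) :
    (∑ i ∈ range (ℓ + 1), (Polynomial.X : Polynomial ℤ) ^ i).natDegree = ℓ := by
  apply le_antisymm
  · apply Polynomial.natDegree_sum_le_of_forall_le
    intro i hi
    simpa [Polynomial.natDegree_X_pow] using Nat.lt_succ_iff.mp (mem_range.mp hi)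
  · apply Polynomial.le_natDegree_of_ne_zero
    simp [Polynomial.finset_sum_coeff, Polynomial.coeff_X_pow]

lemma aux_top_coeff (m ℓ : ℕ) :
    (PowerSeries.coeff (R := ℤ) (m * ℓ))
      ((∑ i ∈ range (ℓ + 1), (PowerSeries.X : ℤ⟦X⟧) ^ i) ^ m) = 1 := by
  set p : Polynomial ℤ := ∑ i ∈ range (ℓ + 1), Polynomial.X ^ i with hp
  have hmonic : p.Monic := Polynomial.monic_geom_sum_X (Nat.succ_ne_zero ℓ)
  have hco : ((p : ℤ⟦X⟧)) = ∑ i ∈ range (ℓ + 1), (PowerSeries.X : ℤ⟦X⟧) ^ i := by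
    apply PowerSeries.ext
    intro n
    rw [Polynomial.coeff_coe, map_sum]
    simp [hp, Polynomial.finset_sum_coeff, Polynomial.coeff_X_pow, PowerSeries.coeff_X_pow]
  rw [← hco, ← Polynomial.coe_pow, Polynomial.coeff_coe]
  have h1 : (p ^ m).natDegree = m * ℓ := by
    rw [hmonic.natDegree_pow, aux_natDegree]
  have := (hmonic.pow m).coeff_natDegree
  rwa [h1] at this

lemma aux_key (m ℓ : ℕ) (hm : 1 ≤ m) :
    ∑ i ∈ range (m + 1),
      ((-1 : ℤ) ^ i * (m.choose i : ℤ) *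
        (if i * (ℓ + 1) ≤ m * ℓ
          then (((m - 1) + (m * ℓ - i * (ℓ + 1))).choose (m - 1) : ℤ) else 0)) = 1 := by
  set G : ℤ⟦X⟧ := (invOneSubPow ℤ m).val with hG
  have hGcoeff : ∀ d : ℕ, PowerSeries.coeff (R := ℤ) d G = (((m - 1) + d).choose (m - 1) : ℤ) := by
    intro d
    rw [hG, invOneSubPow_val_eq_mk_sub_one_add_choose_of_pos _ _ hm, coeff_mk]
  set P : ℤ⟦X⟧ := ∑ i ∈ range (ℓ + 1), PowerSeries.X ^ i with hP
  have hgeom : (1 - PowerSeries.X : ℤ⟦X⟧) * P = 1 - PowerSeries.X ^ (ℓ + 1) :=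
    mul_neg_geom_sum _ _
  have hinv : (1 - PowerSeries.X : ℤ⟦X⟧) ^ m * G = 1 := by
    rw [hG, ← invOneSubPow_inv_eq_one_sub_pow]
    exact (invOneSubPow ℤ m).inv_val
  have hmain : (1 - PowerSeries.X ^ (ℓ + 1) : ℤ⟦X⟧) ^ m * G = P ^ m := by
    rw [← hgeom, mul_pow, mul_assoc, mul_comm (P ^ m), ← mul_assoc, hinv, one_mul]
  have hcoeff := congrArg (PowerSeries.coeff (R := ℤ) (m * ℓ)) hmain
  rw [show (1 - PowerSeries.X ^ (ℓ + 1) : ℤ⟦X⟧) = (-PowerSeries.X ^ (ℓ + 1)) + 1 by ring,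
    add_pow] at hcoeff
  simp only [Finset.sum_mul, map_sum] at hcoeff
  rw [aux_top_coeff m ℓ] at hcoeff
  calc ∑ i ∈ range (m + 1),
      ((-1 : ℤ) ^ i * (m.choose i : ℤ) *
        (if i * (ℓ + 1) ≤ m * ℓ
          then (((m - 1) + (m * ℓ - i * (ℓ + 1))).choose (m - 1) : ℤ) else 0))
      = ∑ i ∈ range (m + 1), (PowerSeries.coeff (R := ℤ) (m * ℓ))
          ((-PowerSeries.X ^ (ℓ + 1)) ^ i * 1 ^ (m - i) * (m.choose i : ℤ⟦X⟧) * G) := by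
        apply Finset.sum_congr rfl
        intro i hi
        have h1 : (-PowerSeries.X ^ (ℓ + 1) : ℤ⟦X⟧) ^ i * 1 ^ (m - i) * (m.choose i : ℤ⟦X⟧) * G
            = PowerSeries.C (R := ℤ) ((-1 : ℤ) ^ i * (m.choose i : ℤ))
                * (PowerSeries.X ^ (i * (ℓ + 1)) * G) := by
          rw [neg_pow, ← pow_mul, map_mul, map_pow, map_neg, map_one, map_natCast]
          ring
        rw [h1, PowerSeries.coeff_C_mul, coeff_X_pow_mul']
        split_ifs with h
        · rw [hGcoeff, mul_assoc]
        · simp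
    _ = 1 := hcoeff

theorem stmt_7 (m ℓ : ℕ) (hm : 1 ≤ m) :
    (((m + m * ℓ - 1).choose (m * ℓ) : ℤ))
      = 1 + ∑ i ∈ Finset.Icc 1 (m * ℓ / (ℓ + 1)),
          (-1) ^ (i + 1) * (m.choose i : ℤ)
            * ((m + m * ℓ - i * (ℓ + 1) - 1).choose (m * ℓ - i * (ℓ + 1)) : ℤ) := by
  have key := aux_key m ℓ hm
  set q := m * ℓ / (ℓ + 1) with hqdef
  have hiff : ∀ i : ℕ, i * (ℓ + 1) ≤ m * ℓ ↔ i ≤ q := by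
    intro i
    rw [hqdef, Nat.le_div_iff_mul_le (Nat.succ_pos ℓ)]
  have hq : q ≤ m := by
    have := (hiff q).mpr le_rfl
    nlinarith
  rw [Finset.range_eq_Ico, Finset.sum_eq_sum_Ico_succ_bot (Nat.succ_pos m) _] at key
  simp only [pow_zero, Nat.choose_zero_right, Nat.cast_one, one_mul, zero_mul,
    Nat.zero_le, if_pos, Nat.sub_zero] at key
  have hsum : ∑ i ∈ Ico 1 (m + 1),
      ((-1 : ℤ) ^ i * (m.choose i : ℤ) *
        (if i * (ℓ + 1) ≤ m * ℓ
          then (((m - 1) + (m * ℓ - i * (ℓ + 1))).choose (m - 1) : ℤ) else 0))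
      = ∑ i ∈ Finset.Icc 1 q, ((-1 : ℤ) ^ i * (m.choose i : ℤ)
          * ((m + m * ℓ - i * (ℓ + 1) - 1).choose (m * ℓ - i * (ℓ + 1)) : ℤ)) := by
    have hss : Finset.Icc 1 q ⊆ Finset.Ico 1 (m + 1) := by
      intro x hx
      simp only [Finset.mem_Icc] at hx
      simp only [Finset.mem_Ico]
      omega
    rw [← Finset.sum_subset hss
      (fun x hx hnx => by
        simp only [Finset.mem_Icc, Finset.mem_Ico] at hx hnx
        rw [if_neg (by rw [hiff]; omega), mul_zero])]
    apply Finset.sum_congr rfl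
    intro i hi
    simp only [Finset.mem_Icc] at hi
    have hle : i * (ℓ + 1) ≤ m * ℓ := (hiff i).mpr hi.2
    rw [if_pos hle]
    congr 2
    rw [show m + m * ℓ - i * (ℓ + 1) - 1 = (m - 1) + (m * ℓ - i * (ℓ + 1)) by omega,
      add_comm, Nat.choose_symm_add]
  rw [hsum] at key
  have hC0 : ((m + m * ℓ - 1).choose (m * ℓ) : ℤ)
      = (((m - 1) + m * ℓ).choose (m - 1) : ℤ) := by
    rw [show m + m * ℓ - 1 = (m - 1) + m * ℓ by omega, add_comm, Nat.choose_symm_add]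
  have hneg : ∑ i ∈ Finset.Icc 1 q, ((-1 : ℤ) ^ (i + 1) * (m.choose i : ℤ)
        * ((m + m * ℓ - i * (ℓ + 1) - 1).choose (m * ℓ - i * (ℓ + 1)) : ℤ))
      = -∑ i ∈ Finset.Icc 1 q, ((-1 : ℤ) ^ i * (m.choose i : ℤ)
        * ((m + m * ℓ - i * (ℓ + 1) - 1).choose (m * ℓ - i * (ℓ + 1)) : ℤ)) := by
    rw [← Finset.sum_neg_distrib]
    apply Finset.sum_congr rfl
    intro i _
    ring
  rw [hC0, hneg]
  linarith [key]
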